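/- Boundary case of the structural theorem: Fix α ∈ (0,1) and an admissible chamber Γ with quantile count vector k := k_{α,Γ}, and let W^{(k)} ∈ W̄ be the shadow-Kelly point W^{(k)}_i = k_i/(n q_i). If W^{(k)} ∉ cl(F_Γ), then every maximizer of the continuous function W ↦ W^{k} over the compact set cl(F_Γ) lies in cl(F_Γ) \ F_Γ, i.e. no maximizer lies in the open chamber F_Γ. -/

import Mathlib

open Finset Filter Topology
open scoped Classical

noncomputable section

/-- The closed Arrow–Debreu wealth simplex `{W ∈ [0,∞)^m : Σ q_i W_i = 1}`. -/
def closedSimplex {m : ℕ} (q : Fin m → ℝ) : Set (Fin m → ℝ) :=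
  {W | (∀ i, 0 ≤ W i) ∧ ∑ i, q i * W i = 1}

/-- The open Arrow–Debreu wealth simplex `{W ∈ (0,∞)^m : Σ q_i W_i = 1}`. -/
def openSimplex {m : ℕ} (q : Fin m → ℝ) : Set (Fin m → ℝ) :=
  {W | (∀ i, 0 < W i) ∧ ∑ i, q i * W i = 1}

/-- The finite set `C_n` of count vectors `k : Fin m → ℕ` with `Σ k_i = n`. -/
def countFinset (m n : ℕ) : Finset (Fin m → ℕ) :=
  (Fintype.piFinset fun _ : Fin m => Finset.range (n + 1)).filter fun k => ∑ i, k i = n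

/-- The monomial `W^k := Π_i W_i^{k_i}` (with the convention `0^0 = 1`). -/
def mono {m : ℕ} (W : Fin m → ℝ) (k : Fin m → ℕ) : ℝ := ∏ i, W i ^ k i

/-- The multinomial probability `π_k = (n!/(k_1!⋯k_m!))·Π p_i^{k_i}`. -/
def countProb {m : ℕ} (p : Fin m → ℝ) (k : Fin m → ℕ) : ℝ :=
  (Nat.multinomial Finset.univ k : ℝ) * ∏ i, p i ^ k i

/-- The upper α-quantile of terminal wealth
`Q_{n,α}(W) := sup{t ∈ [0,∞) : Σ_{k ∈ C_n : W^k ≥ t} π_k ≥ α}`. -/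
def upperQuantile {m : ℕ} (p : Fin m → ℝ) (n : ℕ) (α : ℝ) (W : Fin m → ℝ) : ℝ :=
  sSup {t : ℝ | 0 ≤ t ∧
    α ≤ ∑ k ∈ countFinset m n, if t ≤ mono W k then countProb p k else 0}

/-- The union of the count hyperplanes `H_{k,ℓ}`. -/
def hyperUnion (m n : ℕ) : Set (Fin m → ℝ) :=
  {u | ∃ k ∈ countFinset m n, ∃ l ∈ countFinset m n,
    k ≠ l ∧ ∑ i, ((k i : ℝ) - (l i : ℝ)) * u i = 0}

/-- A chamber is a connected component of the complement of the count arrangement. -/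
def IsChamber (m n : ℕ) (Γ : Set (Fin m → ℝ)) : Prop :=
  ∃ u ∈ (hyperUnion m n)ᶜ, Γ = connectedComponentIn (hyperUnion m n)ᶜ u

/-- `F_Γ := {W ∈ W⁺⁺ : log W ∈ Γ}`. -/
def chamberFace {m : ℕ} (q : Fin m → ℝ) (Γ : Set (Fin m → ℝ)) : Set (Fin m → ℝ) :=
  {W | W ∈ openSimplex q ∧ (fun i => Real.log (W i)) ∈ Γ}

/-- `k` is the quantile count vector `k_{α,Γ}` of the chamber `Γ`: the tail mass at `W^k`
is at least `α`, while the strict tail mass is below `α`, for every `W ∈ F_Γ`. -/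
def IsQuantileVec {m : ℕ} (p q : Fin m → ℝ) (n : ℕ) (α : ℝ) (Γ : Set (Fin m → ℝ))
    (k : Fin m → ℕ) : Prop :=
  k ∈ countFinset m n ∧
  ∀ W ∈ chamberFace q Γ,
    α ≤ (∑ l ∈ countFinset m n, if mono W k ≤ mono W l then countProb p l else 0) ∧
    (∑ l ∈ countFinset m n, if mono W k < mono W l then countProb p l else 0) < α

lemma cast_mul_pow_sub_one (K : ℕ) (x : ℝ) : (K : ℝ) * x ^ (K - 1) * x = (K : ℝ) * x ^ K := by
  cases K with
  | zero => simp
  | succ K => simp [pow_succ]; ring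

lemma hyperUnion_closed (m n : ℕ) : IsClosed (hyperUnion m n) := by
  have : hyperUnion m n = ⋃ k ∈ countFinset m n, ⋃ l ∈ countFinset m n,
      {u : Fin m → ℝ | k ≠ l ∧ ∑ i, ((k i : ℝ) - (l i : ℝ)) * u i = 0} := by
    ext u
    simp only [hyperUnion, Set.mem_setOf_eq, Set.mem_iUnion, Finset.mem_coe]
    tauto
  rw [this]
  refine Set.Finite.isClosed_biUnion (Finset.finite_toSet _) fun k _ => ?_
  refine Set.Finite.isClosed_biUnion (Finset.finite_toSet _) fun l _ => ?_
  by_cases hkl : k = l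
  · simp [hkl]
  · have : {u : Fin m → ℝ | k ≠ l ∧ ∑ i, ((k i : ℝ) - (l i : ℝ)) * u i = 0}
        = {u : Fin m → ℝ | ∑ i, ((k i : ℝ) - (l i : ℝ)) * u i = 0} := by
      ext u; simp [hkl]
    rw [this]
    exact isClosed_eq (by continuity) continuous_const

/-- **Boundary case of the structural theorem.** If the shadow-Kelly point of the
quantile count vector `k = k_{α,Γ}` does not lie in the closure of `F_Γ`, then no
maximizer of `W ↦ W^k` over `cl(F_Γ)` lies in the open chamber `F_Γ`. -/
theorem boundary_case (m n : ℕ) (hm : 2 ≤ m) (hn : 1 ≤ n)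
    (p q : Fin m → ℝ) (hp : ∀ i, 0 < p i ∧ p i < 1) (hpsum : ∑ i, p i = 1)
    (hq : ∀ i, 0 < q i) (α : ℝ) (hα : 0 < α ∧ α < 1)
    (Γ : Set (Fin m → ℝ)) (hΓ : IsChamber m n Γ)
    (hadm : (chamberFace q Γ).Nonempty)
    (k : Fin m → ℕ) (hk : IsQuantileVec p q n α Γ k)
    (hWk : (fun i => (k i : ℝ) / (n * q i)) ∉ closure (chamberFace q Γ)) :
    ∀ Wstar ∈ closure (chamberFace q Γ),
      (∀ W ∈ closure (chamberFace q Γ), mono W k ≤ mono Wstar k) →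
      Wstar ∉ chamberFace q Γ := by
  intro Wstar _hWs hmax hWsF
  obtain ⟨⟨hWpos, hWsum⟩, hlogΓ⟩ := hWsF
  have hksum : ∑ i, k i = n := (Finset.mem_filter.mp hk.1).2
  have hnpos : (0 : ℝ) < n := by exact_mod_cast hn
  -- Wstar is not the shadow-Kelly point
  have hne : Wstar ≠ fun i => (k i : ℝ) / (↑n * q i) := by
    intro h
    exact hWk (h ▸ subset_closure ⟨⟨hWpos, hWsum⟩, hlogΓ⟩)
  -- find a pair of indices with distinct ratios
  obtain ⟨i, j, hij⟩ : ∃ i j, (k j : ℝ) / (q j * Wstar j) < (k i : ℝ) / (q i * Wstar i) := by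
    by_contra h
    push_neg at h
    have hall : ∀ i i', (k i : ℝ) / (q i * Wstar i) = (k i' : ℝ) / (q i' * Wstar i') :=
      fun i i' => le_antisymm (h i i') (h i' i)
    apply hne
    funext i
    have hqw : ∀ l, (0:ℝ) < q l * Wstar l := fun l => mul_pos (hq l) (hWpos l)
    have hsum : (n : ℝ) = ((k i : ℝ) / (q i * Wstar i)) * ∑ l, q l * Wstar l := by
      rw [Finset.mul_sum]
      have : ∀ l ∈ Finset.univ, (k l : ℝ) =
          (k i : ℝ) / (q i * Wstar i) * (q l * Wstar l) := by
        intro l _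
        rw [← hall l i, div_mul_cancel₀ _ (hqw l).ne']
      rw [← Finset.sum_congr rfl this]
      exact_mod_cast congrArg Nat.cast hksum.symm
    rw [hWsum, mul_one, eq_div_iff (hqw i).ne'] at hsum
    rw [eq_div_iff (mul_pos hnpos (hq i)).ne', ← hsum]
    ring
  have hij_ne : i ≠ j := fun h => absurd hij (by rw [h]; exact lt_irrefl _)
  -- the perturbation direction
  set v : Fin m → ℝ := fun l => (if l = i then 1 else 0) / q l - (if l = j then 1 else 0) / q l
    with hv
  have hvi : v i = 1 / q i := by simp [hv, hij_ne]
  have hvj : v j = -(1 / q j) := by simp [hv, hij_ne.symm]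
  have hv0 : ∀ l, l ≠ i → l ≠ j → v l = 0 := by intro l h1 h2; simp [hv, h1, h2]
  have hvsum : ∑ l, q l * v l = 0 := by
    have : ∀ l ∈ Finset.univ, q l * v l =
        (if l = i then (1:ℝ) else 0) - (if l = j then 1 else 0) := by
      intro l _
      rw [hv]
      field_simp [(hq l).ne']
    rw [Finset.sum_congr rfl this, Finset.sum_sub_distrib]
    simp
  set Wt : ℝ → Fin m → ℝ := fun t l => Wstar l + t * v l with hWt
  -- the budget constraint holds along the path
  have hbudget : ∀ t, ∑ l, q l * Wt t l = 1 := by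
    intro t
    have : ∀ l ∈ Finset.univ, q l * Wt t l = q l * Wstar l + t * (q l * v l) := by
      intro l _; rw [hWt]; ring
    rw [Finset.sum_congr rfl this, Finset.sum_add_distrib, ← Finset.mul_sum, hvsum, hWsum]
    ring
  -- splitting of the monomial along the path
  set C : ℝ := ∏ l ∈ (Finset.univ.erase i).erase j, Wstar l ^ k l with hC
  have hjmem : j ∈ Finset.univ.erase i := Finset.mem_erase.mpr ⟨hij_ne.symm, Finset.mem_univ j⟩
  have hsplit : ∀ t, mono (Wt t) k =
      (Wstar i + t * v i) ^ k i * ((Wstar j + t * v j) ^ k j * C) := by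
    intro t
    rw [mono, ← Finset.mul_prod_erase Finset.univ _ (Finset.mem_univ i),
      ← Finset.mul_prod_erase _ _ hjmem]
    congr 2
    refine Finset.prod_congr rfl fun l hl => ?_
    have hlj : l ≠ j := (Finset.mem_erase.mp hl).1
    have hli : l ≠ i := (Finset.mem_erase.mp (Finset.mem_erase.mp hl).2).1
    rw [hWt]
    simp [hv0 l hli hlj]
  -- derivative of the monomial along the path
  set D : ℝ := ((k i : ℝ) * Wstar i ^ (k i - 1) * v i) * (Wstar j ^ k j * C)
      + Wstar i ^ k i * (((k j : ℝ) * Wstar j ^ (k j - 1) * v j) * C) with hD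
  have hderiv : HasDerivAt (fun t => mono (Wt t) k) D 0 := by
    have h1 : HasDerivAt (fun t : ℝ => Wstar i + t * v i) (v i) 0 := by
      simpa using ((hasDerivAt_id (0:ℝ)).mul_const (v i)).const_add (Wstar i)
    have h2 : HasDerivAt (fun t : ℝ => Wstar j + t * v j) (v j) 0 := by
      simpa using ((hasDerivAt_id (0:ℝ)).mul_const (v j)).const_add (Wstar j)
    have h1' := h1.fun_pow (k i)
    have h2' := (h2.fun_pow (k j)).mul_const C
    have := h1'.mul h2'
    simp only [zero_mul, add_zero] at this h1' h2'
    have heq : (fun t => mono (Wt t) k)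
        = fun t => (Wstar i + t * v i) ^ k i * ((Wstar j + t * v j) ^ k j * C) :=
      funext hsplit
    rw [heq, hD]
    exact this
  -- positivity of the derivative
  have hCpos : 0 < C := Finset.prod_pos fun l _ => pow_pos (hWpos l) _
  have hkey : (k j : ℝ) * (q i * Wstar i) < (k i : ℝ) * (q j * Wstar j) := by
    have h1 : (0:ℝ) < q j * Wstar j := mul_pos (hq j) (hWpos j)
    have h2 : (0:ℝ) < q i * Wstar i := mul_pos (hq i) (hWpos i)
    exact (div_lt_div_iff₀ h1 h2).mp hij
  have hki : k i ≠ 0 := by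
    intro h
    rw [h] at hij
    have : (0:ℝ) ≤ (k j : ℝ) / (q j * Wstar j) :=
      div_nonneg (Nat.cast_nonneg _) (mul_pos (hq j) (hWpos j)).le
    simp at hij
    linarith
  have hDpos : 0 < D := by
    have hkipos : (0:ℝ) < (k i : ℝ) := by exact_mod_cast Nat.pos_of_ne_zero hki
    have ea : Wstar i ^ (k i - 1) * Wstar i = Wstar i ^ k i := pow_sub_one_mul hki _
    by_cases hkj : k j = 0
    · have hDeq : D = (k i : ℝ) * Wstar i ^ (k i - 1) * (1 / q i) * (Wstar j ^ k j * C) := by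
        rw [hD, hvi, hvj, hkj]
        push_cast
        ring
      rw [hDeq]
      have h1 := hWpos i
      have h2 := hWpos j
      have h3 := hq i
      positivity
    · have ebj : Wstar j ^ (k j - 1) * Wstar j = Wstar j ^ k j := pow_sub_one_mul hkj _
      have h3 : (k j : ℝ) * Wstar i / q j < (k i : ℝ) * Wstar j / q i := by
        rw [div_lt_div_iff₀ (hq j) (hq i)]
        nlinarith [hkey]
      have hDeq : D = Wstar i ^ (k i - 1) * Wstar j ^ (k j - 1) * C *
          ((k i : ℝ) * Wstar j / q i - (k j : ℝ) * Wstar i / q j) := by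
        rw [hD, hvi, hvj, ← ea, ← ebj]
        ring
      rw [hDeq]
      have h1 := hWpos i
      have h2 := hWpos j
      have h4 := sub_pos.mpr h3
      positivity
  -- topological part: the chamber face is relatively open along the path
  have hΓopen : IsOpen Γ := by
    obtain ⟨u, -, hΓeq⟩ := hΓ
    rw [hΓeq]
    exact ((hyperUnion_closed m n).isOpen_compl).connectedComponentIn
  have hUopen : IsOpen {W : Fin m → ℝ | (∀ l, 0 < W l) ∧ (fun l => Real.log (W l)) ∈ Γ} := by
    rw [isOpen_iff_mem_nhds]
    rintro W ⟨hWp, hWΓ⟩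
    have hpos_open : IsOpen {W : Fin m → ℝ | ∀ l, 0 < W l} := by
      have : {W : Fin m → ℝ | ∀ l, 0 < W l} = ⋂ l, (fun W : Fin m → ℝ => W l) ⁻¹' Set.Ioi 0 := by
        ext W; simp
      rw [this]
      exact isOpen_iInter_of_finite fun l => (continuous_apply l).isOpen_preimage _ isOpen_Ioi
    have hc : ContinuousAt (fun W : Fin m → ℝ => fun l => Real.log (W l)) W := by
      apply continuousAt_pi.2
      intro l
      have hf : ContinuousAt (fun W' : Fin m → ℝ => W' l) W := (continuous_apply l).continuousAt
      exact ContinuousAt.comp (f := fun W' : Fin m → ℝ => W' l) (x := W)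
        (Real.continuousAt_log (hWp l).ne') hf
    filter_upwards [hpos_open.mem_nhds hWp, hc.preimage_mem_nhds (hΓopen.mem_nhds hWΓ)]
      with W' ha hb
    exact ⟨ha, hb⟩
  have hpathcont : Continuous (fun t : ℝ => Wt t) := by
    apply continuous_pi
    intro l
    rw [hWt]
    fun_prop
  have hWt0 : Wt 0 = Wstar := by funext l; rw [hWt]; simp
  have hmem : ∀ᶠ t in 𝓝 (0:ℝ),
      Wt t ∈ {W : Fin m → ℝ | (∀ l, 0 < W l) ∧ (fun l => Real.log (W l)) ∈ Γ} := by
    have h0 : Wt 0 ∈ {W : Fin m → ℝ | (∀ l, 0 < W l) ∧ (fun l => Real.log (W l)) ∈ Γ} := by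
      rw [hWt0]; exact ⟨hWpos, hlogΓ⟩
    exact hpathcont.continuousAt.preimage_mem_nhds (hUopen.mem_nhds h0)
  -- eventually the slope is positive
  have hslope := hasDerivAt_iff_tendsto_slope.mp hderiv
  have hslope_pos : ∀ᶠ t in 𝓝[≠] (0:ℝ), 0 < slope (fun t => mono (Wt t) k) 0 t :=
    hslope.eventually (eventually_gt_nhds hDpos)
  have hle : 𝓝[>] (0:ℝ) ≤ 𝓝[≠] (0:ℝ) :=
    nhdsWithin_mono 0 fun x hx => ne_of_gt hx
  have hboth : ∀ᶠ t in 𝓝[>] (0:ℝ),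
      0 < slope (fun t => mono (Wt t) k) 0 t ∧
      Wt t ∈ {W : Fin m → ℝ | (∀ l, 0 < W l) ∧ (fun l => Real.log (W l)) ∈ Γ} ∧ 0 < t := by
    filter_upwards [hle hslope_pos, nhdsWithin_le_nhds hmem, self_mem_nhdsWithin]
      with t h1 h2 h3
    exact ⟨h1, h2, h3⟩
  obtain ⟨t, hs, ⟨htpos', htΓ⟩, htpos⟩ := hboth.exists
  -- W_t lies in the chamber face
  have htF : Wt t ∈ chamberFace q Γ := ⟨⟨htpos', hbudget t⟩, htΓ⟩
  -- contradiction with maximality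
  have hmax' := hmax (Wt t) (subset_closure htF)
  rw [slope_def_field] at hs
  have ht0 : (0:ℝ) < t - 0 := by linarith
  have := (div_pos_iff.mp hs)
  rcases this with ⟨hnum, -⟩ | ⟨-, hden⟩
  · rw [hWt0] at hnum
    linarith
  · linarith
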